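/- Let N ≥ 3. The intersection over all (λ₁,λ₂) ∈ Λ of the sets of (λ₁,λ₂)-nonnegative ordered tuples μ₁ ≤ ⋯ ≤ μ_N equals the set of tuples with μ_α ≥ 0 for all α. -/

import Mathlib

/-- Membership in the parameter set Λ. -/
def InLambda (x y : ℝ) : Prop :=
  0 ≤ y ∧ y ≤ x ∧ x ≤ 1 ∧ 0 < 1 - (x + y) * y ∧ 1 - (x + y) * y ≤ x

/-- The (λ₁,λ₂)-nonnegativity conditions for a tuple. -/
def IsLamNonneg {N : ℕ} (l1 l2 : ℝ) (μ : Fin N → ℝ) : Prop :=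
  (∀ α β γ : Fin N, α < β → β < γ → 0 ≤ μ α + l1 * μ β + l2 * μ γ) ∧
  (∀ α β : Fin N, α < β → 0 ≤ l1 * μ α + (1 - (l1 + l2) * l2) * μ β)

theorem stmt_12 (N : ℕ) (hN : 3 ≤ N) (μ : Fin N → ℝ) (hmono : Monotone μ) :
    (∀ l1 l2 : ℝ, InLambda l1 l2 → IsLamNonneg l1 l2 μ) ↔
    (∀ α, 0 ≤ μ α) := by
  constructor
  · intro h α
    have h0 : 0 ≤ μ ⟨0, by omega⟩ := by
      by_contra hneg
      push_neg at hneg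
      set m0 := μ ⟨0, by omega⟩ with hm0
      set m1 := μ ⟨1, by omega⟩ with hm1
      set c : ℝ := min (1/2) ((-m0)/(2*(|m1|+1))) with hc
      have hce : 0 < c := by
        apply lt_min (by norm_num)
        apply div_pos (by linarith) (by positivity)
      have hc1 : c ≤ 1 := le_trans (min_le_left _ _) (by norm_num)
      set y : ℝ := (Real.sqrt (5 - 4*c) - 1)/2 with hy
      have hs : Real.sqrt (5-4*c) ^ 2 = 5 - 4*c := Real.sq_sqrt (by linarith)
      have hs1 : 1 ≤ Real.sqrt (5-4*c) := by
        nlinarith [Real.sqrt_nonneg (5-4*c)]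
      have hs3 : Real.sqrt (5-4*c) ≤ 3 := by
        nlinarith [Real.sqrt_nonneg (5-4*c)]
      have hkey : 1 - (1+y)*y = c := by rw [hy]; nlinarith
      have hlam : InLambda 1 y := by
        refine ⟨by rw [hy]; linarith, by rw [hy]; linarith, le_refl 1, ?_, ?_⟩
        · rw [hkey]; exact hce
        · rw [hkey]; linarith
      have h2 := (h 1 y hlam).2 ⟨0, by omega⟩ ⟨1, by omega⟩ (by simp [Fin.lt_def])
      rw [hkey] at h2
      rw [← hm0, ← hm1] at h2
      have hcm : c * m1 < -m0 := by
        have h1 : c ≤ (-m0)/(2*(|m1|+1)) := min_le_right _ _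
        have hle : c * m1 ≤ c * |m1| :=
          mul_le_mul_of_nonneg_left (le_abs_self m1) hce.le
        have h3 : c * |m1| < -m0 := by
          calc c * |m1| ≤ (-m0)/(2*(|m1|+1)) * |m1| :=
                mul_le_mul_of_nonneg_right h1 (abs_nonneg m1)
            _ < -m0 := by
                rw [div_mul_eq_mul_div, div_lt_iff₀ (by positivity)]
                nlinarith [abs_nonneg m1]
        linarith
      linarith
    calc (0:ℝ) ≤ μ ⟨0, by omega⟩ := h0
      _ ≤ μ α := hmono (by simp [Fin.le_def])
  · intro h l1 l2 hl
    obtain ⟨hy0, hyx, hx1, hpos, _⟩ := hl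
    have hl1 : 0 ≤ l1 := le_trans hy0 hyx
    constructor
    · intro α β γ _ _
      exact add_nonneg (add_nonneg (h α) (mul_nonneg hl1 (h β))) (mul_nonneg hy0 (h γ))
    · intro α β _
      exact add_nonneg (mul_nonneg hl1 (h α)) (mul_nonneg hpos.le (h β))
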